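/- Let Ω ⊂ ℂ be a bounded, open, simply connected domain, φ : 𝔻 → Ω a conformal mapping, and 1 ≤ p < 2. Then for every C¹ function f : Ω → ℝ with ∫_Ω |∇f|² dx < ∞, the composition f∘φ satisfies (∫_𝔻 |∇(f∘φ)(y)|^p dy)^{1/p} ≤ π^{(2−p)/p} · (∫_Ω |∇f(x)|² dx)^{1/2}. (This bounds the norm of the composition operator φ* : L^{1,2}(Ω) → L^{1,p}(𝔻) generated by the conformal map φ.) -/

import Mathlib

open MeasureTheory Metric Set
open scoped ENNReal NNReal Real

lemma aux_det (c : ℂ) :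
    (((1 : ℂ →L[ℂ] ℂ).smulRight c).restrictScalars ℝ).det = Complex.normSq c := by
  have h : ((((1 : ℂ →L[ℂ] ℂ).smulRight c).restrictScalars ℝ : ℂ →L[ℝ] ℂ) : ℂ →ₗ[ℝ] ℂ)
      = Algebra.lmul ℝ ℂ c := by
    apply LinearMap.ext
    intro z
    simp [mul_comm]
  rw [ContinuousLinearMap.det, h, ← Algebra.norm_apply, Algebra.norm_complex_apply]

lemma aux_norm_comp (A : ℂ →L[ℝ] ℝ) (c : ℂ) :
    ‖A.comp (((1 : ℂ →L[ℂ] ℂ).smulRight c).restrictScalars ℝ)‖ = ‖A‖ * ‖c‖ := by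
  set M : ℂ →L[ℝ] ℂ := ((1 : ℂ →L[ℂ] ℂ).smulRight c).restrictScalars ℝ with hM
  have hMnorm : ‖M‖ = ‖c‖ := by
    rw [hM, ContinuousLinearMap.norm_restrictScalars,
      ContinuousLinearMap.norm_smulRight_apply, norm_one, one_mul]
  rcases eq_or_ne c 0 with rfl | hc
  · have : M = 0 := by ext z; simp [hM]
    simp [this]
  · apply le_antisymm
    · calc ‖A.comp M‖ ≤ ‖A‖ * ‖M‖ := A.opNorm_comp_le M
        _ = ‖A‖ * ‖c‖ := by rw [hMnorm]
    · set M' : ℂ →L[ℝ] ℂ := ((1 : ℂ →L[ℂ] ℂ).smulRight c⁻¹).restrictScalars ℝ with hM'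
      have hA : A = (A.comp M).comp M' := by
        ext z
        simp only [ContinuousLinearMap.comp_apply, hM, hM',
          ContinuousLinearMap.coe_restrictScalars', ContinuousLinearMap.smulRight_apply,
          ContinuousLinearMap.one_apply, smul_eq_mul]
        rw [mul_assoc, inv_mul_cancel₀ hc, mul_one]
      have h1 : ‖A‖ ≤ ‖A.comp M‖ * ‖c‖⁻¹ := by
        calc ‖A‖ = ‖(A.comp M).comp M'‖ := by rw [← hA]
          _ ≤ ‖A.comp M‖ * ‖M'‖ := (A.comp M).opNorm_comp_le M'
          _ = ‖A.comp M‖ * ‖c‖⁻¹ := by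
              rw [hM', ContinuousLinearMap.norm_restrictScalars,
                ContinuousLinearMap.norm_smulRight_apply, norm_one, one_mul,
                norm_inv]
      have hc0 : (0:ℝ) < ‖c‖ := norm_pos_iff.mpr hc
      calc ‖A‖ * ‖c‖ ≤ (‖A.comp M‖ * ‖c‖⁻¹) * ‖c‖ := by
            exact mul_le_mul_of_nonneg_right h1 hc0.le
        _ = ‖A.comp M‖ := by rw [mul_assoc, inv_mul_cancel₀ (ne_of_gt hc0), mul_one]

/-- The composition operator `φ* : L^{1,2}(Ω) → L^{1,p}(𝔻)` generated by
a conformal map `φ : 𝔻 → Ω` is bounded with norm at most `π^{(2−p)/p}`, for `1 ≤ p < 2`. -/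
theorem composition_operator_gradient_bound
    (Ω : Set ℂ) (hΩopen : IsOpen Ω) (hΩbdd : Bornology.IsBounded Ω)
    (hΩsc : SimplyConnectedSpace Ω)
    (φ : ℂ → ℂ)
    (hφdiff : DifferentiableOn ℂ φ (ball (0:ℂ) 1))
    (hφderiv : ∀ y ∈ ball (0:ℂ) 1, deriv φ y ≠ 0)
    (hφbij : Set.BijOn φ (ball (0:ℂ) 1) Ω)
    (p : ℝ) (hp1 : 1 ≤ p) (hp2 : p < 2)
    (f : ℂ → ℝ) (hf : ContDiffOn ℝ 1 f Ω)
    (hfint : IntegrableOn (fun x => ‖fderiv ℝ f x‖ ^ 2) Ω) :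
    (∫ y in ball (0:ℂ) 1, ‖fderiv ℝ (f ∘ φ) y‖ ^ p) ^ (1/p) ≤
      Real.pi ^ ((2 - p)/p) * (∫ x in Ω, ‖fderiv ℝ f x‖ ^ 2) ^ ((1:ℝ)/2) := by
  have hp0 : (0:ℝ) < p := lt_of_lt_of_le one_pos hp1
  set s : Set ℂ := ball (0:ℂ) 1 with hs_def
  have hs : MeasurableSet s := measurableSet_ball
  set F' : ℂ → ℂ →L[ℝ] ℂ :=
    fun y => ((1 : ℂ →L[ℂ] ℂ).smulRight (deriv φ y)).restrictScalars ℝ with hF'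
  have hder : ∀ y ∈ s, HasFDerivAt φ (F' y) y := by
    intro y hy
    have h1 : DifferentiableAt ℂ φ y := hφdiff.differentiableAt (isOpen_ball.mem_nhds hy)
    exact (h1.hasDerivAt.hasFDerivAt).restrictScalars ℝ
  have hderW : ∀ y ∈ s, HasFDerivWithinAt φ (F' y) s y :=
    fun y hy => (hder y hy).hasFDerivWithinAt
  have hdet : ∀ y, |(F' y).det| = ‖deriv φ y‖ ^ 2 := by
    intro y
    rw [hF', aux_det, abs_of_nonneg (Complex.normSq_nonneg _), ← Complex.sq_norm]
  have himg : φ '' s = Ω := hφbij.image_eq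
  -- change of variables
  have hCoV : ∫ x in Ω, ‖fderiv ℝ f x‖ ^ 2
      = ∫ y in s, ‖deriv φ y‖ ^ 2 * ‖fderiv ℝ f (φ y)‖ ^ 2 := by
    rw [← himg,
      integral_image_eq_integral_abs_det_fderiv_smul volume hs hderW hφbij.injOn
        (fun x => ‖fderiv ℝ f x‖ ^ 2)]
    simp_rw [hdet, smul_eq_mul]
  have hInt : IntegrableOn (fun y => ‖deriv φ y‖ ^ 2 * ‖fderiv ℝ f (φ y)‖ ^ 2) s := by
    have h := (integrableOn_image_iff_integrableOn_abs_det_fderiv_smul volume hs hderW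
      hφbij.injOn (fun x => ‖fderiv ℝ f x‖ ^ 2)).mp (himg ▸ hfint)
    simpa [hdet, smul_eq_mul] using h
  set G : ℂ → ℝ := fun y => ‖fderiv ℝ f (φ y)‖ * ‖deriv φ y‖ with hG
  have hGnn : ∀ y, 0 ≤ G y := fun y => mul_nonneg (norm_nonneg _) (norm_nonneg _)
  -- chain rule
  have hchain : ∀ y ∈ s, ‖fderiv ℝ (f ∘ φ) y‖ = G y := by
    intro y hy
    have hfd : HasFDerivAt f (fderiv ℝ f (φ y)) (φ y) :=
      ((hf.contDiffAt (hΩopen.mem_nhds (hφbij.mapsTo hy))).differentiableAt one_ne_zero).hasFDerivAt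
    have hcomp := (hfd.comp y (hder y hy)).fderiv
    rw [hcomp, hF', aux_norm_comp]
  -- measurability / continuity of G on s
  have hGcont : ContinuousOn G s := by
    have h1 : ContinuousOn (fderiv ℝ f) Ω := hf.continuousOn_fderiv_of_isOpen hΩopen le_rfl
    have h2 : ContinuousOn φ s := hφdiff.continuousOn
    have h3 : ContinuousOn (fun y => ‖fderiv ℝ f (φ y)‖) s :=
      (h1.comp h2 hφbij.mapsTo).norm
    have h4 : ContinuousOn (deriv φ) s :=
      (hφdiff.contDiffOn isOpen_ball (n := 1)).continuousOn_deriv_of_isOpen isOpen_ball le_rfl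
    exact h3.mul h4.norm
  have hGmeas : AEStronglyMeasurable G (volume.restrict s) := hGcont.aestronglyMeasurable hs
  -- MemLp facts
  have hG2int : Integrable (fun y => G y ^ 2) (volume.restrict s) := by
    have : (fun y => G y ^ 2) = fun y => ‖deriv φ y‖ ^ 2 * ‖fderiv ℝ f (φ y)‖ ^ 2 := by
      funext y; rw [hG]; ring
    rw [this]; exact hInt
  have hG2 : MemLp G 2 (volume.restrict s) := (memLp_two_iff_integrable_sq hGmeas).mpr hG2int
  have hGp : MemLp (fun y => G y ^ p) (ENNReal.ofReal (2/p)) (volume.restrict s) := by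
    have h := hG2.norm_rpow_div (ENNReal.ofReal p)
    rw [ENNReal.toReal_ofReal hp0.le] at h
    have he : (2 : ℝ≥0∞) / ENNReal.ofReal p = ENNReal.ofReal (2/p) := by
      rw [ENNReal.ofReal_div_of_pos hp0, ENNReal.ofReal_ofNat]
    rw [he] at h
    have hfun : (fun y => ‖G y‖ ^ p) = fun y => G y ^ p := by
      funext y; rw [Real.norm_of_nonneg (hGnn y)]
    rwa [hfun] at h
  haveI : IsFiniteMeasure (volume.restrict s) :=
    ⟨by rw [Measure.restrict_apply_univ]; exact measure_ball_lt_top⟩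
  have h1p : MemLp (fun _ : ℂ => (1:ℝ)) (ENNReal.ofReal (2/(2-p))) (volume.restrict s) :=
    memLp_const 1
  have hpq : Real.HolderConjugate (2/p) (2/(2-p)) := by
    refine ⟨?_, by positivity, div_pos two_pos (by linarith)⟩
    rw [inv_div, inv_div, inv_one]; ring
  -- Hölder
  have hH := integral_mul_le_Lp_mul_Lq_of_nonneg hpq
    (Filter.Eventually.of_forall (fun y => Real.rpow_nonneg (hGnn y) p))
    (Filter.Eventually.of_forall (fun _ => zero_le_one)) hGp h1p
  -- simplify Hölder
  have hvol : ∫ (_ : ℂ) in s, (1:ℝ) ^ (2/(2-p)) = π := by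
    simp only [Real.one_rpow]
    rw [setIntegral_const, smul_eq_mul, mul_one, hs_def, measureReal_def, Complex.volume_ball]
    simp
  have hsq : (fun y => (G y ^ p) ^ (2/p)) = fun y => G y ^ 2 := by
    funext y
    rw [← Real.rpow_natCast (G y) 2, ← Real.rpow_mul (hGnn y)]
    congr 1
    · field_simp; norm_num
  have hre : ∫ y in s, G y ^ (2:ℕ) = ∫ x in Ω, ‖fderiv ℝ f x‖ ^ 2 := by
    rw [hCoV]
    congr 1; funext y; rw [hG]; ring
  rw [hsq] at hH
  have hL : ∫ y in s, ‖fderiv ℝ (f ∘ φ) y‖ ^ p = ∫ y in s, G y ^ p :=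
    setIntegral_congr_fun hs (fun y hy => by rw [hchain y hy])
  set I : ℝ := ∫ x in Ω, ‖fderiv ℝ f x‖ ^ 2 with hI
  have hI0 : 0 ≤ I := setIntegral_nonneg hΩopen.measurableSet (fun x _ => by positivity)
  have hmain : ∫ y in s, ‖fderiv ℝ (f ∘ φ) y‖ ^ p ≤ I ^ (p/2) * π ^ ((2-p)/2) := by
    rw [hL]
    calc ∫ y in s, G y ^ p = ∫ y in s, G y ^ p * 1 := by simp
      _ ≤ _ := hH
      _ = I ^ (p/2) * π ^ ((2-p)/2) := by
          rw [hre, hvol, one_div_div, one_div_div]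
  have hL0 : 0 ≤ ∫ y in s, ‖fderiv ℝ (f ∘ φ) y‖ ^ p :=
    setIntegral_nonneg hs (fun y _ => Real.rpow_nonneg (norm_nonneg _) p)
  calc (∫ y in s, ‖fderiv ℝ (f ∘ φ) y‖ ^ p) ^ (1/p)
      ≤ (I ^ (p/2) * π ^ ((2-p)/2)) ^ (1/p) :=
        Real.rpow_le_rpow hL0 hmain (by positivity)
    _ = I ^ ((p/2)*(1/p)) * π ^ (((2-p)/2)*(1/p)) := by
        rw [Real.mul_rpow (Real.rpow_nonneg hI0 _) (Real.rpow_nonneg Real.pi_nonneg _),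
          ← Real.rpow_mul hI0, ← Real.rpow_mul Real.pi_nonneg]
    _ = I ^ ((1:ℝ)/2) * π ^ ((2-p)/(2*p)) := by
        rw [show (p/2)*(1/p) = (1:ℝ)/2 by field_simp, show ((2-p)/2)*(1/p) = (2-p)/(2*p) by ring]
    _ ≤ I ^ ((1:ℝ)/2) * π ^ ((2-p)/p) := by
        refine mul_le_mul_of_nonneg_left ?_ (Real.rpow_nonneg hI0 _)
        refine Real.rpow_le_rpow_of_exponent_le (by linarith [Real.pi_gt_three]) ?_
        rw [div_le_div_iff₀ (by linarith) hp0]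
        nlinarith
    _ = π ^ ((2-p)/p) * I ^ ((1:ℝ)/2) := mul_comm _ _
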